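/- Let n ≥ 1 be an integer with n ≠ 2, and let 0 < R₀ < R₁. Then there exist c₀, c₁, c₂, c₃ ∈ ℝ such that the function z(r) = c₀ r³ + c₁ r^{3−n} + c₂ r + c₃ r^{1−n} satisfies z(R₀) = −1, z(R₁) = −1, z′(R₀) = 0, z′(R₁) = 0, and |z(r)| ≤ 1 for all r ∈ [R₀, R₁]. (This shows that for n ≠ 2 every annulus A_{R₀}^{R₁} with non-constant signature is calibrable via the radial field Z(x) = z(|x|)x/|x|.) -/

import Mathlib

open Set

open Set

/-- Mean value theorem wrapper. -/
lemma mvtD {f f' : ℝ → ℝ} {x y : ℝ} (hxy : x < y)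
    (hd : ∀ t ∈ Set.Icc x y, HasDerivAt f (f' t) t) :
    ∃ t ∈ Set.Ioo x y, f' t = (f y - f x) / (y - x) :=
  exists_hasDerivAt_eq_slope f f' hxy
    (fun t ht => (hd t ht).continuousAt.continuousWithinAt)
    (fun t ht => hd t (Ioo_subset_Icc_self ht))

/-- Rolle wrapper. -/
lemma rolleD {f f' : ℝ → ℝ} {x y : ℝ} (hxy : x < y)
    (hd : ∀ t ∈ Set.Icc x y, HasDerivAt f (f' t) t) (hfxy : f x = f y) :
    ∃ t ∈ Set.Ioo x y, f' t = 0 := by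
  obtain ⟨t, ht, he⟩ := mvtD hxy hd
  exact ⟨t, ht, by rw [he, hfxy, sub_self, zero_div]⟩

/-- IVT: zero between a negative and a positive value. -/
lemma ivt_neg_pos {f : ℝ → ℝ} {x y : ℝ} (hxy : x < y) (hf : Continuous f)
    (h1 : f x < 0) (h2 : 0 < f y) : ∃ t ∈ Set.Ioo x y, f t = 0 := by
  have := intermediate_value_Ioo hxy.le hf.continuousOn (a := x) (b := y)
  obtain ⟨t, ht, he⟩ := this ⟨h1, h2⟩
  exact ⟨t, ht, he⟩

lemma ivt_pos_neg {f : ℝ → ℝ} {x y : ℝ} (hxy : x < y) (hf : Continuous f)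
    (h1 : 0 < f x) (h2 : f y < 0) : ∃ t ∈ Set.Ioo x y, f t = 0 := by
  have := intermediate_value_Ioo' hxy.le hf.continuousOn (a := x) (b := y)
  obtain ⟨t, ht, he⟩ := this ⟨h2, h1⟩
  exact ⟨t, ht, he⟩

/-- derivative of a monomial with constant coefficient -/
lemma hdaMono (C : ℝ) (k : ℕ) (x : ℝ) :
    HasDerivAt (fun r : ℝ => C * r ^ k) (C * k * x ^ (k - 1)) x := by
  simpa [mul_assoc] using (hasDerivAt_pow k x).const_mul C

/-- derivative of constant over power -/
lemma hdaDiv (C : ℝ) (k : ℕ) {x : ℝ} (hx : x ≠ 0) :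
    HasDerivAt (fun r : ℝ => C / r ^ k) (-(C * k) / x ^ (k + 1)) x := by
  rcases k with _ | j
  · simpa using (hasDerivAt_const x C)
  · have h := ((hasDerivAt_pow (j + 1) x).inv (pow_ne_zero _ hx)).const_mul C
    have e : ∀ r : ℝ, C * (r ^ (j + 1))⁻¹ = C / r ^ (j + 1) := by
      intro r; rw [div_eq_mul_inv]
    simp only [Pi.inv_apply] at h
    rw [funext e] at h
    convert h using 1
    · rfl
    · rfl
    have hp : x ^ (j + 1) ≠ 0 := pow_ne_zero _ hx
    rw [Nat.add_sub_cancel]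
    field_simp
    ring

/-- A function A r^(m+4) + B r^(m+2) + C with three distinct positive zeros is zero. -/
lemma three_zeros (m : ℕ) {A B C u v w : ℝ} (hu : 0 < u) (huv : u < v) (hvw : v < w)
    (h1 : A * u ^ (m + 4) + B * u ^ (m + 2) + C = 0)
    (h2 : A * v ^ (m + 4) + B * v ^ (m + 2) + C = 0)
    (h3 : A * w ^ (m + 4) + B * w ^ (m + 2) + C = 0) :
    A = 0 ∧ B = 0 ∧ C = 0 := by
  set f : ℝ → ℝ := fun r => A * r ^ (m + 4) + B * r ^ (m + 2) + C with hf
  set f' : ℝ → ℝ := fun r => A * (m + 4) * r ^ (m + 3) + B * (m + 2) * r ^ (m + 1) with hf'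
  have hd : ∀ t ∈ Set.Icc u w, HasDerivAt f (f' t) t := by
    intro t _
    have := ((hdaMono A (m + 4) t).add (hdaMono B (m + 2) t)).add_const C
    simpa [hf, hf'] using this
  obtain ⟨s1, hs1, he1⟩ := rolleD huv (fun t ht => hd t ⟨ht.1, ht.2.trans hvw.le⟩)
      (by simp [hf, h1, h2])
  obtain ⟨s2, hs2, he2⟩ := rolleD hvw (fun t ht => hd t ⟨huv.le.trans ht.1, ht.2⟩)
      (by simp [hf, h2, h3])
  have hs1p : 0 < s1 := hu.trans hs1.1
  have hs2p : 0 < s2 := hs1p.trans (hs1.2.trans hs2.1)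
  have key : ∀ s : ℝ, 0 < s → f' s = 0 → A * (m + 4) * s ^ 2 + B * (m + 2) = 0 := by
    intro s hs h0
    have : s ^ (m + 1) * (A * (m + 4) * s ^ 2 + B * (m + 2)) = 0 := by
      rw [← h0, hf']; ring
    rcases mul_eq_zero.mp this with h | h
    · exact absurd h (pow_ne_zero _ hs.ne')
    · exact h
  have k1 := key s1 hs1p he1
  have k2 := key s2 hs2p he2
  have hss : s1 ^ 2 < s2 ^ 2 :=
    pow_lt_pow_left₀ (hs1.2.trans hs2.1) hs1p.le two_ne_zero
  have hfac : (A * ((m:ℝ) + 4)) * (s1 ^ 2 - s2 ^ 2) = 0 := by linear_combination k1 - k2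
  have hA : A = 0 := by
    rcases mul_eq_zero.mp hfac with h | h
    · have hm4 : ((m:ℝ) + 4) ≠ 0 := by positivity
      exact (mul_eq_zero.mp h).resolve_right hm4
    · exact absurd h (sub_ne_zero.mpr hss.ne)
  have hB : B = 0 := by
    have : B * ((m:ℝ) + 2) = 0 := by rw [hA] at k1; linarith
    have hm2 : ((m:ℝ) + 2) ≠ 0 := by positivity
    exact (mul_eq_zero.mp this).resolve_right hm2
  refine ⟨hA, hB, ?_⟩
  rw [hA, hB] at h1; simpa using h1

/-- A function A r^3 + B r + C with three distinct positive zeros is zero. -/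
lemma cubic_three {A B C u v w : ℝ} (hu : 0 < u) (huv : u < v) (hvw : v < w)
    (h1 : A * u ^ 3 + B * u + C = 0)
    (h2 : A * v ^ 3 + B * v + C = 0)
    (h3 : A * w ^ 3 + B * w + C = 0) :
    A = 0 ∧ B = 0 ∧ C = 0 := by
  set f : ℝ → ℝ := fun r => A * r ^ 3 + B * r + C with hf
  set f' : ℝ → ℝ := fun r => A * 3 * r ^ 2 + B with hf'
  have hd : ∀ t ∈ Set.Icc u w, HasDerivAt f (f' t) t := by
    intro t _
    have := ((hdaMono A 3 t).add (by simpa using (hdaMono B 1 t))).add_const C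
    simpa [hf, hf'] using this
  obtain ⟨s1, hs1, he1⟩ := rolleD huv (fun t ht => hd t ⟨ht.1, ht.2.trans hvw.le⟩)
      (by simp [hf, h1, h2])
  obtain ⟨s2, hs2, he2⟩ := rolleD hvw (fun t ht => hd t ⟨huv.le.trans ht.1, ht.2⟩)
      (by simp [hf, h2, h3])
  have hs1p : 0 < s1 := hu.trans hs1.1
  have hs2p : 0 < s2 := hs1p.trans (hs1.2.trans hs2.1)
  have he1' : A * 3 * s1 ^ 2 + B = 0 := he1
  have he2' : A * 3 * s2 ^ 2 + B = 0 := he2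
  have hss : s1 ^ 2 < s2 ^ 2 :=
    pow_lt_pow_left₀ (hs1.2.trans hs2.1) hs1p.le two_ne_zero
  have hfac : (A * 3) * (s1 ^ 2 - s2 ^ 2) = 0 := by linear_combination he1' - he2'
  have hA : A = 0 := by
    rcases mul_eq_zero.mp hfac with h | h
    · linarith [mul_eq_zero.mp h]
      -- fallback
    · exact absurd h (sub_ne_zero.mpr hss.ne)
  have hB : B = 0 := by
    rw [hA] at he1'; linarith
  refine ⟨hA, hB, ?_⟩
  rw [hA, hB] at h1; simpa using h1

/-- A function A r^(m+4) + B r^(m+2) + E r^(m+1) + D with four distinct positive zeros has E = 0 -/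
lemma four_zeros (m : ℕ) {A B E D z1 z2 z3 z4 : ℝ} (h1p : 0 < z1) (h12 : z1 < z2)
    (h23 : z2 < z3) (h34 : z3 < z4)
    (e1 : A * z1 ^ (m + 4) + B * z1 ^ (m + 2) + E * z1 ^ (m + 1) + D = 0)
    (e2 : A * z2 ^ (m + 4) + B * z2 ^ (m + 2) + E * z2 ^ (m + 1) + D = 0)
    (e3 : A * z3 ^ (m + 4) + B * z3 ^ (m + 2) + E * z3 ^ (m + 1) + D = 0)
    (e4 : A * z4 ^ (m + 4) + B * z4 ^ (m + 2) + E * z4 ^ (m + 1) + D = 0) :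
    E = 0 := by
  set f : ℝ → ℝ := fun r => A * r ^ (m + 4) + B * r ^ (m + 2) + E * r ^ (m + 1) + D with hf
  set f' : ℝ → ℝ :=
    fun r => A * (m + 4) * r ^ (m + 3) + B * (m + 2) * r ^ (m + 1) + E * (m + 1) * r ^ m with hf'
  have hd : ∀ t : ℝ, HasDerivAt f (f' t) t := by
    intro t
    have := (((hdaMono A (m + 4) t).add (hdaMono B (m + 2) t)).add
      (hdaMono E (m + 1) t)).add_const D
    simpa [hf, hf'] using this
  obtain ⟨y1, hy1, k1⟩ := rolleD h12 (fun t _ => hd t) (by simp [hf, e1, e2])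
  obtain ⟨y2, hy2, k2⟩ := rolleD h23 (fun t _ => hd t) (by simp [hf, e2, e3])
  obtain ⟨y3, hy3, k3⟩ := rolleD h34 (fun t _ => hd t) (by simp [hf, e3, e4])
  have hy1p : 0 < y1 := h1p.trans hy1.1
  have hy2p : 0 < y2 := hy1p.trans (hy1.2.trans hy2.1)
  have hy3p : 0 < y3 := hy2p.trans (hy2.2.trans hy3.1)
  have key : ∀ s : ℝ, 0 < s → f' s = 0 →
      (A * (m + 4)) * s ^ 3 + (B * (m + 2)) * s + E * (m + 1) = 0 := by
    intro s hs h0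
    have : s ^ m * ((A * (m + 4)) * s ^ 3 + (B * (m + 2)) * s + E * (m + 1)) = 0 := by
      rw [← h0, hf']; ring
    rcases mul_eq_zero.mp this with h | h
    · exact absurd h (pow_ne_zero _ hs.ne')
    · exact h
  obtain ⟨-, -, hE⟩ := cubic_three hy1p (hy1.2.trans hy2.1) (hy2.2.trans hy3.1)
    (key y1 hy1p k1) (key y2 hy2p k2) (key y3 hy3p k3)
  have hm1 : ((m:ℝ) + 1) ≠ 0 := by positivity
  exact (mul_eq_zero.mp hE).resolve_right hm1


/-- the profile numerator `g` -/
def gF (m : ℕ) (c0 c1 c2 c3 : ℝ) (r : ℝ) : ℝ :=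
  c0 * r ^ (m + 6) + c2 * r ^ (m + 4) + r ^ (m + 3) + c1 * r ^ 2 + c3

/-- its derivative -/
def gF1 (m : ℕ) (c0 c1 c2 : ℝ) (r : ℝ) : ℝ :=
  ((m:ℝ) + 6) * c0 * r ^ (m + 5) + ((m:ℝ) + 4) * c2 * r ^ (m + 3)
  + ((m:ℝ) + 3) * r ^ (m + 2) + 2 * c1 * r

/-- second derivative -/
def gF2 (m : ℕ) (c0 c1 c2 : ℝ) (r : ℝ) : ℝ :=
  ((m:ℝ) + 6) * ((m:ℝ) + 5) * c0 * r ^ (m + 4)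
  + ((m:ℝ) + 4) * ((m:ℝ) + 3) * c2 * r ^ (m + 2)
  + ((m:ℝ) + 3) * ((m:ℝ) + 2) * r ^ (m + 1) + 2 * c1

lemma hda_gF (m : ℕ) (c0 c1 c2 c3 : ℝ) (r : ℝ) :
    HasDerivAt (gF m c0 c1 c2 c3) (gF1 m c0 c1 c2 r) r := by
  have h := ((((hdaMono c0 (m + 6) r).add (hdaMono c2 (m + 4) r)).add
    (hdaMono 1 (m + 3) r)).add (hdaMono c1 2 r)).add_const c3
  have e1 : m + 6 - 1 = m + 5 := by omega
  have e2 : m + 4 - 1 = m + 3 := by omega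
  have e3 : m + 3 - 1 = m + 2 := by omega
  rw [e1, e2, e3] at h
  convert h using 1
  · rfl
  · rfl
  · funext x; simp only [gF, Pi.add_apply]; ring
  · simp only [gF1]; push_cast; ring

lemma hda_gF1 (m : ℕ) (c0 c1 c2 : ℝ) (r : ℝ) :
    HasDerivAt (gF1 m c0 c1 c2) (gF2 m c0 c1 c2 r) r := by
  have h := (((hdaMono (((m:ℝ) + 6) * c0) (m + 5) r).add
    (hdaMono (((m:ℝ) + 4) * c2) (m + 3) r)).add
    (hdaMono ((m:ℝ) + 3) (m + 2) r)).add (hdaMono (2 * c1) 1 r)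
  have e1 : m + 5 - 1 = m + 4 := by omega
  have e2 : m + 3 - 1 = m + 2 := by omega
  have e3 : m + 2 - 1 = m + 1 := by omega
  rw [e1, e2, e3] at h
  convert h using 1
  · rfl
  · rfl
  · funext x; simp only [gF1, Pi.add_apply]; ring
  · simp only [gF2]; push_cast; ring

/-- Chain A : c0 is positive. -/
lemma c0_pos {m : ℕ} {a b c0 c1 c2 c3 : ℝ} (ha : 0 < a) (hab : a < b)
    (ga : gF m c0 c1 c2 c3 a = 0) (gb : gF m c0 c1 c2 c3 b = 0)
    (g1a : gF1 m c0 c1 c2 a = 0) (g1b : gF1 m c0 c1 c2 b = 0) : 0 < c0 := by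
  have hb : 0 < b := ha.trans hab
  obtain ⟨ρ, hρ, hρ0⟩ := rolleD hab (fun t _ => hda_gF m c0 c1 c2 c3 t) (ga.trans gb.symm)
  have hρp : 0 < ρ := ha.trans hρ.1
  set A1a : ℝ → ℝ := fun r => ((m:ℝ) + 6) * c0 * r ^ (m + 4) + ((m:ℝ) + 4) * c2 * r ^ (m + 2)
    + ((m:ℝ) + 3) * r ^ (m + 1) + 2 * c1 with hA1a
  have hg1fac : ∀ r : ℝ, gF1 m c0 c1 c2 r = r * A1a r := by
    intro r; simp only [gF1, hA1a]; ring
  have hA1a_zero : ∀ r : ℝ, 0 < r → gF1 m c0 c1 c2 r = 0 → A1a r = 0 := by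
    intro r hr h0
    have := hg1fac r
    rw [h0] at this
    rcases mul_eq_zero.mp this.symm with h | h
    · exact absurd h hr.ne'
    · exact h
  have za : A1a a = 0 := hA1a_zero a ha g1a
  have zρ : A1a ρ = 0 := hA1a_zero ρ hρp hρ0
  have zb : A1a b = 0 := hA1a_zero b hb g1b
  set A2 : ℝ → ℝ := fun r => ((m:ℝ) + 6) * c0 * (↑(m + 4)) * r ^ (m + 3)
    + ((m:ℝ) + 4) * c2 * (↑(m + 2)) * r ^ (m + 1)
    + ((m:ℝ) + 3) * (↑(m + 1)) * r ^ m with hA2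
  have hdaA1a : ∀ r : ℝ, HasDerivAt A1a (A2 r) r := by
    intro r
    have h := (((hdaMono (((m:ℝ) + 6) * c0) (m + 4) r).add
      (hdaMono (((m:ℝ) + 4) * c2) (m + 2) r)).add
      (hdaMono ((m:ℝ) + 3) (m + 1) r)).add_const (2 * c1)
    have e1 : m + 4 - 1 = m + 3 := by omega
    have e2 : m + 2 - 1 = m + 1 := by omega
    have e3 : m + 1 - 1 = m := by omega
    rw [e1, e2, e3] at h
    exact h
  obtain ⟨ζ1, hζ1, hz1⟩ := rolleD hρ.1 (fun t _ => hdaA1a t) (za.trans zρ.symm)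
  obtain ⟨ζ2, hζ2, hz2⟩ := rolleD hρ.2 (fun t _ => hdaA1a t) (zρ.trans zb.symm)
  have hζ1p : 0 < ζ1 := ha.trans hζ1.1
  have hζ2p : 0 < ζ2 := hρp.trans hζ2.1
  set A2b : ℝ → ℝ := fun r => ((m:ℝ) + 6) * c0 * (↑(m + 4)) * r ^ 2
    + ((m:ℝ) + 4) * c2 * (↑(m + 2)) + ((m:ℝ) + 3) * (↑(m + 1)) / r with hA2b
  have hA2fac : ∀ r : ℝ, r ≠ 0 → A2 r = r ^ (m + 1) * A2b r := by
    intro r hr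
    simp only [hA2, hA2b]
    field_simp
    ring
  have hA2b_zero : ∀ r : ℝ, 0 < r → A2 r = 0 → A2b r = 0 := by
    intro r hr h0
    have := hA2fac r hr.ne'
    rw [h0] at this
    rcases mul_eq_zero.mp this.symm with h | h
    · exact absurd h (pow_ne_zero _ hr.ne')
    · exact h
  set A3 : ℝ → ℝ := fun r => ((m:ℝ) + 6) * c0 * (↑(m + 4)) * 2 * r
    - (((m:ℝ) + 3) * (↑(m + 1))) / r ^ 2 with hA3
  have hdaA2b : ∀ t ∈ Set.Icc ζ1 ζ2, HasDerivAt A2b (A3 t) t := by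
    intro t ht
    have htp : (0:ℝ) < t := lt_of_lt_of_le hζ1p ht.1
    have h := ((hdaMono (((m:ℝ) + 6) * c0 * (↑(m + 4))) 2 t).add_const
      (((m:ℝ) + 4) * c2 * (↑(m + 2)))).add
      (hdaDiv (((m:ℝ) + 3) * (↑(m + 1))) 1 htp.ne')
    convert h using 1
    · rfl
    · rfl
    · funext x; simp only [hA2b, pow_one, Pi.add_apply]
    · simp only [hA3, pow_one]; push_cast; ring
  obtain ⟨ρ2, hρ2, hr2⟩ := rolleD (hζ1.2.trans hζ2.1) hdaA2b
    ((hA2b_zero ζ1 hζ1p hz1).trans (hA2b_zero ζ2 hζ2p hz2).symm)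
  have hρ2p : 0 < ρ2 := hζ1p.trans hρ2.1
  have hr2' : ((m:ℝ) + 6) * c0 * (↑(m + 4)) * 2 * ρ2
      - (((m:ℝ) + 3) * (↑(m + 1))) / ρ2 ^ 2 = 0 := hr2
  have hpos : (0:ℝ) < (((m:ℝ) + 3) * (↑(m + 1))) / ρ2 ^ 2 := by positivity
  have h5 : 0 < ((m:ℝ) + 6) * c0 * (↑(m + 4)) * 2 * ρ2 := by linarith
  by_contra hc
  push_neg at hc
  have hm4 : (0:ℝ) < (↑(m + 4) : ℝ) := by positivity
  have hm6 : (0:ℝ) < (m:ℝ) + 6 := by positivity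
  nlinarith [mul_pos (mul_pos hm6 hm4) hρ2p]

set_option maxHeartbeats 1000000 in
/-- Chain B : c1 is negative and c3 positive. -/
lemma c1_neg_c3_pos {m : ℕ} {a b c0 c1 c2 c3 : ℝ} (ha : 0 < a) (hab : a < b)
    (ga : gF m c0 c1 c2 c3 a = 0) (gb : gF m c0 c1 c2 c3 b = 0)
    (g1a : gF1 m c0 c1 c2 a = 0) (g1b : gF1 m c0 c1 c2 b = 0) :
    c1 < 0 ∧ 0 < c3 := by
  have hb : 0 < b := ha.trans hab
  -- G0 = g / r^(m+6)
  set G0 : ℝ → ℝ := fun r => c0 + c2 / r ^ 2 + 1 / r ^ 3 + c1 / r ^ (m + 4)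
    + c3 / r ^ (m + 6) with hG0
  have hG0fac : ∀ r : ℝ, r ≠ 0 → gF m c0 c1 c2 c3 r = r ^ (m + 6) * G0 r := by
    intro r hr
    simp only [gF, hG0]
    field_simp
    ring
  have hG0zero : ∀ r : ℝ, 0 < r → gF m c0 c1 c2 c3 r = 0 → G0 r = 0 := by
    intro r hr h0
    have := hG0fac r hr.ne'
    rw [h0] at this
    rcases mul_eq_zero.mp this.symm with h | h
    · exact absurd h (pow_ne_zero _ hr.ne')
    · exact h
  set B1 : ℝ → ℝ := fun r => -(c2 * 2) / r ^ 3 + -(1 * 3) / r ^ 4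
    + -(c1 * (↑(m + 4))) / r ^ (m + 5) + -(c3 * (↑(m + 6))) / r ^ (m + 7) with hB1
  have hdaG0 : ∀ t : ℝ, t ≠ 0 → HasDerivAt G0 (B1 t) t := by
    intro t ht
    have h := ((((hdaDiv c2 2 ht).add (hdaDiv 1 3 ht)).add
      (hdaDiv c1 (m + 4) ht)).add (hdaDiv c3 (m + 6) ht)).const_add c0
    have e1 : m + 4 + 1 = m + 5 := by omega
    have e2 : m + 6 + 1 = m + 7 := by omega
    rw [e1, e2] at h
    have hfun : G0 = (fun r : ℝ => c0 + (c2 / r ^ 2 + 1 / r ^ 3 + c1 / r ^ (m + 4)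
        + c3 / r ^ (m + 6))) := by
      funext x; simp only [hG0]; try ring
    rw [hfun]
    convert h using 1
    · rfl
    · rfl
    · rfl
    try (simp only [hB1]; push_cast; ring)
  -- B1 vanishes at a and b (double zeros of G0)
  have hB1ab : ∀ r : ℝ, 0 < r → gF m c0 c1 c2 c3 r = 0 → gF1 m c0 c1 c2 r = 0 →
      B1 r = 0 := by
    intro r hr h0 h1
    have hpne : r ^ (m + 6) ≠ 0 := pow_ne_zero _ hr.ne'
    have hq : HasDerivAt (fun x : ℝ => gF m c0 c1 c2 c3 x * (x ^ (m + 6))⁻¹)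
        (gF1 m c0 c1 c2 r * (r ^ (m + 6))⁻¹ + gF m c0 c1 c2 c3 r *
          (-(↑(m + 6) * r ^ (m + 6 - 1)) / (r ^ (m + 6)) ^ 2)) r :=
      (hda_gF m c0 c1 c2 c3 r).mul ((hasDerivAt_pow (m + 6) r).inv hpne)
    rw [h0, h1] at hq
    simp only [zero_mul, mul_zero, add_zero, zero_add] at hq
    have heq : G0 =ᶠ[nhds r] fun x : ℝ => gF m c0 c1 c2 c3 x * (x ^ (m + 6))⁻¹ := by
      apply Filter.eventuallyEq_of_mem (Metric.ball_mem_nhds r hr)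
      intro x hx
      have hxp : 0 < x := by
        have := abs_lt.mp (by simpa [Real.dist_eq] using hx)
        linarith [this.1]
      have hxe : x ^ (m + 6) ≠ 0 := pow_ne_zero _ hxp.ne'
      show G0 x = gF m c0 c1 c2 c3 x * (x ^ (m + 6))⁻¹
      rw [hG0fac x hxp.ne']
      field_simp
    have hq' : HasDerivAt G0 0 r := (heq.hasDerivAt_iff).mpr hq
    exact (hdaG0 r hr.ne').unique hq'
  have zB1a : B1 a = 0 := hB1ab a ha ga g1a
  have zB1b : B1 b = 0 := hB1ab b hb gb g1b
  -- Rolle on G0 gives interior zero of B1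
  obtain ⟨ρ, hρ, hρ0⟩ := rolleD hab
    (fun t ht => hdaG0 t (lt_of_lt_of_le ha ht.1).ne')
    ((hG0zero a ha ga).trans (hG0zero b hb gb).symm)
  have hρp : 0 < ρ := ha.trans hρ.1
  -- B1b = r^3 * B1
  set B1b : ℝ → ℝ := fun r => -(c2 * 2) + -(1 * 3) / r + -(c1 * (↑(m + 4))) / r ^ (m + 2)
    + -(c3 * (↑(m + 6))) / r ^ (m + 4) with hB1b
  have hB1bfac : ∀ r : ℝ, r ≠ 0 → B1b r = r ^ 3 * B1 r := by
    intro r hr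
    simp only [hB1, hB1b]
    field_simp
    ring
  have hB1bzero : ∀ r : ℝ, 0 < r → B1 r = 0 → B1b r = 0 := by
    intro r hr h0
    rw [hB1bfac r hr.ne', h0, mul_zero]
  set B2 : ℝ → ℝ := fun r => (1 * 3) / r ^ 2 + (c1 * (↑(m + 4)) * (↑(m + 2))) / r ^ (m + 3)
    + (c3 * (↑(m + 6)) * (↑(m + 4))) / r ^ (m + 5) with hB2
  have hdaB1b : ∀ t : ℝ, t ≠ 0 → HasDerivAt B1b (B2 t) t := by
    intro t ht
    have h := (((hdaDiv (-(1 * 3)) 1 ht).add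
      (hdaDiv (-(c1 * (↑(m + 4)))) (m + 2) ht)).add
      (hdaDiv (-(c3 * (↑(m + 6)))) (m + 4) ht)).const_add (-(c2 * 2))
    have e1 : m + 2 + 1 = m + 3 := by omega
    have e2 : m + 4 + 1 = m + 5 := by omega
    rw [e1, e2] at h
    have hfun : B1b = (fun r : ℝ => -(c2 * 2) + (-(1 * 3) / r ^ 1 + -(c1 * (↑(m + 4))) / r ^ (m + 2)
        + -(c3 * (↑(m + 6))) / r ^ (m + 4))) := by
      funext x; simp only [hB1b]; try ring
    rw [hfun]
    convert h using 1
    · rfl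
    · rfl
    · rfl
    try (simp only [hB2]; push_cast; ring)
  obtain ⟨x1, hx1, hx1e⟩ := rolleD hρ.1
    (fun t ht => hdaB1b t (lt_of_lt_of_le ha ht.1).ne')
    ((hB1bzero a ha zB1a).trans (hB1bzero ρ hρp hρ0).symm)
  obtain ⟨x2, hx2, hx2e⟩ := rolleD hρ.2
    (fun t ht => hdaB1b t (lt_of_lt_of_le hρp ht.1).ne')
    ((hB1bzero ρ hρp hρ0).trans (hB1bzero b hb zB1b).symm)
  have hx1p : 0 < x1 := ha.trans hx1.1
  have hx2p : 0 < x2 := hρp.trans hx2.1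
  have hx12 : x1 < x2 := hx1.2.trans hx2.1
  -- B2c = r^(m+5) * B2 : polynomial form
  set B2c : ℝ → ℝ := fun r => (1 * 3) * r ^ (m + 3) + (c1 * (↑(m + 4)) * (↑(m + 2))) * r ^ 2
    + (c3 * (↑(m + 6)) * (↑(m + 4))) with hB2c
  have hB2cfac : ∀ r : ℝ, r ≠ 0 → B2c r = r ^ (m + 5) * B2 r := by
    intro r hr
    simp only [hB2, hB2c]
    field_simp
    ring
  have hB2czero : ∀ r : ℝ, 0 < r → B2 r = 0 → B2c r = 0 := by
    intro r hr h0
    rw [hB2cfac r hr.ne', h0, mul_zero]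
  set B3 : ℝ → ℝ := fun r => (1 * 3) * (↑(m + 3)) * r ^ (m + 2)
    + (c1 * (↑(m + 4)) * (↑(m + 2))) * 2 * r with hB3
  have hdaB2c : ∀ t : ℝ, HasDerivAt B2c (B3 t) t := by
    intro t
    have h := ((hdaMono (1 * 3) (m + 3) t).add
      (hdaMono (c1 * (↑(m + 4)) * (↑(m + 2))) 2 t)).add_const
      (c3 * (↑(m + 6)) * (↑(m + 4)))
    have e1 : m + 3 - 1 = m + 2 := by omega
    rw [e1] at h
    have hfun : B2c = (fun r : ℝ => ((1 * 3) * r ^ (m + 3)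
        + (c1 * (↑(m + 4)) * (↑(m + 2))) * r ^ 2) + (c3 * (↑(m + 6)) * (↑(m + 4)))) := by
      funext x; simp only [hB2c]; try ring
    rw [hfun]
    convert h using 1
    · rfl
    · rfl
    · rfl
    try (simp only [hB3]; push_cast; ring)
  obtain ⟨ρ1, hρ1, hρ1e⟩ := rolleD hx12 (fun t _ => hdaB2c t)
    ((hB2czero x1 hx1p hx1e).trans (hB2czero x2 hx2p hx2e).symm)
  have hρ1p : 0 < ρ1 := hx1p.trans hρ1.1
  have hc1 : c1 < 0 := by
    have hr : (1 * 3) * ((↑(m + 3)):ℝ) * ρ1 ^ (m + 2)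
        + (c1 * (↑(m + 4)) * (↑(m + 2))) * 2 * ρ1 = 0 := hρ1e
    have hp1 : (0:ℝ) < (1 * 3) * ((↑(m + 3)):ℝ) * ρ1 ^ (m + 2) := by positivity
    have hneg : (c1 * (↑(m + 4)) * (↑(m + 2))) * 2 * ρ1 < 0 := by linarith
    by_contra hc
    push_neg at hc
    have hp4 : (0:ℝ) < ((↑(m + 4)):ℝ) := by positivity
    have hp2 : (0:ℝ) < ((↑(m + 2)):ℝ) := by positivity
    nlinarith [mul_pos (mul_pos hp4 hp2) hρ1p]
  -- B2d = r^2 * B2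
  set B2d : ℝ → ℝ := fun r => (1 * 3) + (c1 * (↑(m + 4)) * (↑(m + 2))) / r ^ (m + 1)
    + (c3 * (↑(m + 6)) * (↑(m + 4))) / r ^ (m + 3) with hB2d
  have hB2dfac : ∀ r : ℝ, r ≠ 0 → B2d r = r ^ 2 * B2 r := by
    intro r hr
    simp only [hB2, hB2d]
    field_simp
    ring
  have hB2dzero : ∀ r : ℝ, 0 < r → B2 r = 0 → B2d r = 0 := by
    intro r hr h0
    rw [hB2dfac r hr.ne', h0, mul_zero]
  set B4 : ℝ → ℝ := fun r => -(c1 * (↑(m + 4)) * (↑(m + 2)) * (↑(m + 1))) / r ^ (m + 2)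
    + -(c3 * (↑(m + 6)) * (↑(m + 4)) * (↑(m + 3))) / r ^ (m + 4) with hB4
  have hdaB2d : ∀ t : ℝ, t ≠ 0 → HasDerivAt B2d (B4 t) t := by
    intro t ht
    have h := ((hdaDiv (c1 * (↑(m + 4)) * (↑(m + 2))) (m + 1) ht).add
      (hdaDiv (c3 * (↑(m + 6)) * (↑(m + 4))) (m + 3) ht)).const_add (1 * 3)
    have e1 : m + 1 + 1 = m + 2 := by omega
    have e2 : m + 3 + 1 = m + 4 := by omega
    rw [e1, e2] at h
    have hfun : B2d = (fun r : ℝ => (1 * 3) + ((c1 * (↑(m + 4)) * (↑(m + 2))) / r ^ (m + 1)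
        + (c3 * (↑(m + 6)) * (↑(m + 4))) / r ^ (m + 3))) := by
      funext x; simp only [hB2d]; try ring
    rw [hfun]
    convert h using 1
    · rfl
    · rfl
    · rfl
    try (simp only [hB4]; push_cast; ring)
  obtain ⟨ρ2, hρ2, hρ2e⟩ := rolleD hx12
    (fun t ht => hdaB2d t (lt_of_lt_of_le hx1p ht.1).ne')
    ((hB2dzero x1 hx1p hx1e).trans (hB2dzero x2 hx2p hx2e).symm)
  have hρ2p : 0 < ρ2 := hx1p.trans hρ2.1
  refine ⟨hc1, ?_⟩
  have hr : -(c1 * (↑(m + 4)) * (↑(m + 2)) * (↑(m + 1))) / ρ2 ^ (m + 2)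
      + -(c3 * (↑(m + 6)) * (↑(m + 4)) * (↑(m + 3))) / ρ2 ^ (m + 4) = 0 := hρ2e
  -- multiply by ρ2^(m+4)
  have hmul : -(c1 * (↑(m + 4)) * (↑(m + 2)) * (↑(m + 1))) * ρ2 ^ 2
      + -(c3 * (↑(m + 6)) * (↑(m + 4)) * (↑(m + 3))) = 0 := by
    have hne : (ρ2 : ℝ) ≠ 0 := hρ2p.ne'
    have := congrArg (fun y : ℝ => y * ρ2 ^ (m + 4)) hr
    simp only [add_mul, zero_mul] at this
    calc -(c1 * (↑(m + 4)) * (↑(m + 2)) * (↑(m + 1))) * ρ2 ^ 2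
        + -(c3 * (↑(m + 6)) * (↑(m + 4)) * (↑(m + 3)))
        = -(c1 * (↑(m + 4)) * (↑(m + 2)) * (↑(m + 1))) / ρ2 ^ (m + 2) * ρ2 ^ (m + 4)
          + -(c3 * (↑(m + 6)) * (↑(m + 4)) * (↑(m + 3))) / ρ2 ^ (m + 4) * ρ2 ^ (m + 4) := by
          field_simp
          ring
      _ = 0 := this
  have hc1n : 0 < -c1 := by linarith
  have hfirst : 0 < -(c1 * ((↑(m + 4)):ℝ) * (↑(m + 2)) * (↑(m + 1))) * ρ2 ^ 2 := by
    have h9 : 0 < (-c1) * ((↑(m + 4)):ℝ) * ((↑(m + 2)):ℝ) * ((↑(m + 1)):ℝ) * ρ2 ^ 2 := by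
      have p4 : (0:ℝ) < ((↑(m + 4)):ℝ) := by positivity
      have p2 : (0:ℝ) < ((↑(m + 2)):ℝ) := by positivity
      have p1 : (0:ℝ) < ((↑(m + 1)):ℝ) := by positivity
      exact mul_pos (mul_pos (mul_pos (mul_pos hc1n p4) p2) p1) (pow_pos hρ2p 2)
    linarith [h9]
  have h10 : 0 < c3 * (((↑(m + 6)):ℝ) * (↑(m + 4)) * (↑(m + 3))) := by linarith [hfirst, hmul]
  have hK : (0:ℝ) < ((↑(m + 6)):ℝ) * (↑(m + 4)) * (↑(m + 3)) := by positivity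
  by_contra hc
  push_neg at hc
  have : c3 * (((↑(m + 6)):ℝ) * (↑(m + 4)) * (↑(m + 3))) ≤ 0 :=
    mul_nonpos_of_nonpos_of_nonneg hc hK.le
  linarith

/-- the homogeneous quartic-type function (also `r^(m+3) - g`) -/
def pF (m : ℕ) (c0 c1 c2 c3 : ℝ) (r : ℝ) : ℝ :=
  c0 * r ^ (m + 6) + c2 * r ^ (m + 4) + c1 * r ^ 2 + c3

def pF1 (m : ℕ) (c0 c1 c2 : ℝ) (r : ℝ) : ℝ :=
  ((m:ℝ) + 6) * c0 * r ^ (m + 5) + ((m:ℝ) + 4) * c2 * r ^ (m + 3) + 2 * c1 * r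

lemma hda_pF (m : ℕ) (c0 c1 c2 c3 : ℝ) (r : ℝ) :
    HasDerivAt (pF m c0 c1 c2 c3) (pF1 m c0 c1 c2 r) r := by
  have h := (((hdaMono c0 (m + 6) r).add (hdaMono c2 (m + 4) r)).add
    (hdaMono c1 2 r)).add_const c3
  have e1 : m + 6 - 1 = m + 5 := by omega
  have e2 : m + 4 - 1 = m + 3 := by omega
  rw [e1, e2] at h
  convert h using 1
  · rfl
  · rfl
  · rfl
  simp only [pF1]; push_cast; ring

lemma pF1_zero_Q {m : ℕ} {c0 c1 c2 : ℝ} {r : ℝ} (hr : 0 < r)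
    (h : pF1 m c0 c1 c2 r = 0) :
    (((m:ℝ) + 6) * c0) * r ^ (m + 4) + (((m:ℝ) + 4) * c2) * r ^ (m + 2) + 2 * c1 = 0 := by
  have : r * ((((m:ℝ) + 6) * c0) * r ^ (m + 4) + (((m:ℝ) + 4) * c2) * r ^ (m + 2) + 2 * c1)
      = 0 := by
    rw [← h]; simp only [pF1]; ring
  rcases mul_eq_zero.mp this with h' | h'
  · exact absurd h' hr.ne'
  · exact h'

/-- three distinct positive zeros of pF1 kill all its coefficients -/
lemma pF1_three {m : ℕ} {c0 c1 c2 : ℝ} {u v w : ℝ} (hu : 0 < u) (huv : u < v) (hvw : v < w)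
    (h1 : pF1 m c0 c1 c2 u = 0) (h2 : pF1 m c0 c1 c2 v = 0) (h3 : pF1 m c0 c1 c2 w = 0) :
    c0 = 0 ∧ c1 = 0 ∧ c2 = 0 := by
  have hv : 0 < v := hu.trans huv
  have hw : 0 < w := hv.trans hvw
  obtain ⟨hA, hB, hC⟩ := three_zeros m hu huv hvw
    (pF1_zero_Q hu h1) (pF1_zero_Q hv h2) (pF1_zero_Q hw h3)
  have hm6 : ((m:ℝ) + 6) ≠ 0 := by positivity
  have hm4 : ((m:ℝ) + 4) ≠ 0 := by positivity
  refine ⟨(mul_eq_zero.mp hA).resolve_left hm6, by linarith, (mul_eq_zero.mp hB).resolve_left hm4⟩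

/-- uniqueness of the homogeneous interpolation problem -/
lemma interp_unique {m : ℕ} {a b c0 c1 c2 c3 : ℝ} (ha : 0 < a) (hab : a < b)
    (pa : pF m c0 c1 c2 c3 a = 0) (pb : pF m c0 c1 c2 c3 b = 0)
    (p1a : pF1 m c0 c1 c2 a = 0) (p1b : pF1 m c0 c1 c2 b = 0) :
    c0 = 0 ∧ c1 = 0 ∧ c2 = 0 ∧ c3 = 0 := by
  obtain ⟨ρ, hρ, hρe⟩ := rolleD hab (fun t _ => hda_pF m c0 c1 c2 c3 t) (pa.trans pb.symm)
  obtain ⟨h0, h1, h2⟩ := pF1_three ha hρ.1 hρ.2 p1a hρe p1b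
  refine ⟨h0, h1, h2, ?_⟩
  have := pa
  rw [pF, h0, h1, h2] at this
  simpa using this

/-- four distinct positive zeros of pF force c0 = 0 -/
lemma pF_four {m : ℕ} {c0 c1 c2 c3 : ℝ} {x1 x2 x3 x4 : ℝ} (h1p : 0 < x1)
    (h12 : x1 < x2) (h23 : x2 < x3) (h34 : x3 < x4)
    (e1 : pF m c0 c1 c2 c3 x1 = 0) (e2 : pF m c0 c1 c2 c3 x2 = 0)
    (e3 : pF m c0 c1 c2 c3 x3 = 0) (e4 : pF m c0 c1 c2 c3 x4 = 0) : c0 = 0 := by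
  obtain ⟨y1, hy1, k1⟩ := rolleD h12 (fun t _ => hda_pF m c0 c1 c2 c3 t) (e1.trans e2.symm)
  obtain ⟨y2, hy2, k2⟩ := rolleD h23 (fun t _ => hda_pF m c0 c1 c2 c3 t) (e2.trans e3.symm)
  obtain ⟨y3, hy3, k3⟩ := rolleD h34 (fun t _ => hda_pF m c0 c1 c2 c3 t) (e3.trans e4.symm)
  exact (pF1_three (h1p.trans hy1.1) (hy1.2.trans hy2.1) (hy2.2.trans hy3.1) k1 k2 k3).1

/-- find a point near 0 where a continuous function is still above y -/
lemma near_zero_gt {f : ℝ → ℝ} (hf : Continuous f) {c y : ℝ} (hy : y < f 0) (hc : 0 < c) :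
    ∃ x : ℝ, 0 < x ∧ x < c ∧ y < f x := by
  have h := (hf.continuousAt (x := (0:ℝ))).eventually (eventually_gt_nhds hy)
  rw [Metric.eventually_nhds_iff] at h
  obtain ⟨ε, hε, hh⟩ := h
  refine ⟨min (ε / 2) (c / 2), by positivity, ?_, ?_⟩
  · exact lt_of_le_of_lt (min_le_right _ _) (by linarith)
  · apply hh
    rw [Real.dist_eq, sub_zero, abs_of_pos (by positivity)]
    exact lt_of_le_of_lt (min_le_left _ _) (by linarith)

lemma near_zero_lt {f : ℝ → ℝ} (hf : Continuous f) {c y : ℝ} (hy : f 0 < y) (hc : 0 < c) :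
    ∃ x : ℝ, 0 < x ∧ x < c ∧ f x < y := by
  obtain ⟨x, h1, h2, h3⟩ := near_zero_gt (f := fun t => -f t) (hf.neg) (y := -y)
    (by simpa using hy) hc
  exact ⟨x, h1, h2, by simpa using h3⟩

lemma gF_cont (m : ℕ) (c0 c1 c2 c3 : ℝ) : Continuous (gF m c0 c1 c2 c3) :=
  continuous_iff_continuousAt.mpr (fun x => (hda_gF m c0 c1 c2 c3 x).continuousAt)

lemma gF1_cont (m : ℕ) (c0 c1 c2 : ℝ) : Continuous (gF1 m c0 c1 c2) :=
  continuous_iff_continuousAt.mpr (fun x => (hda_gF1 m c0 c1 c2 x).continuousAt)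

lemma gF2_cont (m : ℕ) (c0 c1 c2 : ℝ) : Continuous (gF2 m c0 c1 c2) := by
  unfold gF2; fun_prop

lemma pF_cont (m : ℕ) (c0 c1 c2 c3 : ℝ) : Continuous (pF m c0 c1 c2 c3) :=
  continuous_iff_continuousAt.mpr (fun x => (hda_pF m c0 c1 c2 c3 x).continuousAt)

lemma gF_at_zero (m : ℕ) (c0 c1 c2 c3 : ℝ) : gF m c0 c1 c2 c3 0 = c3 := by
  have h1 : (0:ℝ) ^ (m + 6) = 0 := zero_pow (by omega)
  have h2 : (0:ℝ) ^ (m + 4) = 0 := zero_pow (by omega)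
  have h3 : (0:ℝ) ^ (m + 3) = 0 := zero_pow (by omega)
  have h4 : (0:ℝ) ^ 2 = 0 := zero_pow (by omega)
  simp only [gF, h1, h2, h3, h4]; ring

lemma gF1_at_zero (m : ℕ) (c0 c1 c2 : ℝ) : gF1 m c0 c1 c2 0 = 0 := by
  have h1 : (0:ℝ) ^ (m + 5) = 0 := zero_pow (by omega)
  have h2 : (0:ℝ) ^ (m + 3) = 0 := zero_pow (by omega)
  have h3 : (0:ℝ) ^ (m + 2) = 0 := zero_pow (by omega)
  simp only [gF1, h1, h2, h3]; ring

lemma pF_at_zero (m : ℕ) (c0 c1 c2 c3 : ℝ) : pF m c0 c1 c2 c3 0 = c3 := by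
  have h1 : (0:ℝ) ^ (m + 6) = 0 := zero_pow (by omega)
  have h2 : (0:ℝ) ^ (m + 4) = 0 := zero_pow (by omega)
  have h4 : (0:ℝ) ^ 2 = 0 := zero_pow (by omega)
  simp only [pF, h1, h2, h4]; ring

/-- lower bound : g is nonnegative on [a,b] -/
lemma bound_lower {m : ℕ} {a b c0 c1 c2 c3 : ℝ} (ha : 0 < a) (hab : a < b)
    (hc3 : 0 < c3)
    (ga : gF m c0 c1 c2 c3 a = 0) (gb : gF m c0 c1 c2 c3 b = 0)
    (g1a : gF1 m c0 c1 c2 a = 0) (g1b : gF1 m c0 c1 c2 b = 0) :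
    ∀ r ∈ Set.Icc a b, 0 ≤ gF m c0 c1 c2 c3 r := by
  by_contra hcon
  push_neg at hcon
  obtain ⟨ξ, hmem, hneg⟩ := hcon
  set g := gF m c0 c1 c2 c3 with hgdef
  set g1 := gF1 m c0 c1 c2 with hg1def
  set g2 := gF2 m c0 c1 c2 with hg2def
  have hdg : ∀ t : ℝ, HasDerivAt g (g1 t) t := fun t => hda_gF m c0 c1 c2 c3 t
  have hdg1 : ∀ t : ℝ, HasDerivAt g1 (g2 t) t := fun t => hda_gF1 m c0 c1 c2 t
  have hξa : a < ξ := by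
    rcases lt_or_eq_of_le hmem.1 with h | h
    · exact h
    · exfalso; rw [← h] at hneg; rw [ga] at hneg; exact absurd hneg (lt_irrefl 0)
  have hξb : ξ < b := by
    rcases lt_or_eq_of_le hmem.2 with h | h
    · exact h
    · exfalso; rw [h] at hneg; rw [gb] at hneg; exact absurd hneg (lt_irrefl 0)
  -- point r0 near 0 where g > 0
  obtain ⟨r0, hr0p, hr0a, hr0g⟩ := near_zero_gt (gF_cont m c0 c1 c2 c3)
    (by rw [gF_at_zero]; exact hc3) ha
  -- τ1 in (r0, a) with g1 < 0
  obtain ⟨τ1, hτ1, hτ1e⟩ := mvtD hr0a (fun t _ => hdg t)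
  have hτ1neg : g1 τ1 < 0 := by
    rw [hτ1e, ga]
    exact div_neg_of_neg_of_pos (by linarith) (by linarith [hτ1.1, hτ1.2])
  -- point e near 0 with g1 e > g1 τ1
  have hτ1p : 0 < τ1 := hr0p.trans hτ1.1
  obtain ⟨e, hep, heτ1, heg⟩ := near_zero_gt (gF1_cont m c0 c1 c2)
    (by rw [gF1_at_zero]; exact hτ1neg) hτ1p
  -- η1 in (e, τ1) with g2 < 0
  obtain ⟨η1, hη1, hη1e⟩ := mvtD heτ1 (fun t _ => hdg1 t)
  have hη1neg : g2 η1 < 0 := by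
    rw [hη1e]
    exact div_neg_of_neg_of_pos (by linarith) (by linarith [hη1.1, hη1.2])
  -- η2 in (τ1, a) with g2 > 0
  obtain ⟨η2, hη2, hη2e⟩ := mvtD (hτ1.2 : τ1 < a) (fun t _ => hdg1 t)
  have hη2pos : 0 < g2 η2 := by
    rw [hη2e, g1a]
    exact div_pos (by linarith) (by linarith [hη2.1, hη2.2])
  -- τ2 in (a, ξ) with g1 < 0
  obtain ⟨τ2, hτ2, hτ2e⟩ := mvtD hξa (fun t _ => hdg t)
  have hτ2neg : g1 τ2 < 0 := by
    rw [hτ2e, ga]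
    exact div_neg_of_neg_of_pos (by linarith) (by linarith [hτ2.1, hτ2.2])
  -- η3 in (a, τ2) with g2 < 0
  obtain ⟨η3, hη3, hη3e⟩ := mvtD (hτ2.1 : a < τ2) (fun t _ => hdg1 t)
  have hη3neg : g2 η3 < 0 := by
    rw [hη3e, g1a]
    exact div_neg_of_neg_of_pos (by linarith) (by linarith [hη3.1, hη3.2])
  -- τ3 in (ξ, b) with g1 > 0
  obtain ⟨τ3, hτ3, hτ3e⟩ := mvtD hξb (fun t _ => hdg t)
  have hτ3pos : 0 < g1 τ3 := by
    rw [hτ3e, gb]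
    exact div_pos (by linarith) (by linarith [hτ3.1, hτ3.2])
  -- η4 in (τ2, τ3) with g2 > 0
  have hτ23 : τ2 < τ3 := hτ2.2.trans hτ3.1
  obtain ⟨η4, hη4, hη4e⟩ := mvtD hτ23 (fun t _ => hdg1 t)
  have hη4pos : 0 < g2 η4 := by
    rw [hη4e]
    exact div_pos (by linarith) (by linarith [hη4.1, hη4.2])
  -- η5 in (τ3, b) with g2 < 0
  obtain ⟨η5, hη5, hη5e⟩ := mvtD (hτ3.2 : τ3 < b) (fun t _ => hdg1 t)
  have hη5neg : g2 η5 < 0 := by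
    rw [hη5e, g1b]
    exact div_neg_of_neg_of_pos (by linarith) (by linarith [hη5.1, hη5.2])
  -- four zeros of g2
  have hcont2 : Continuous g2 := gF2_cont m c0 c1 c2
  have h12 : η1 < η2 := hη1.2.trans hη2.1
  have h23 : η2 < η3 := hη2.2.trans hη3.1
  have h34 : η3 < η4 := hη3.2.trans hη4.1
  have h45 : η4 < η5 := hη4.2.trans hη5.1
  obtain ⟨ζ1, hζ1, hζ1e⟩ := ivt_neg_pos h12 hcont2 hη1neg hη2pos
  obtain ⟨ζ2, hζ2, hζ2e⟩ := ivt_pos_neg h23 hcont2 hη2pos hη3neg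
  obtain ⟨ζ3, hζ3, hζ3e⟩ := ivt_neg_pos h34 hcont2 hη3neg hη4pos
  obtain ⟨ζ4, hζ4, hζ4e⟩ := ivt_pos_neg h45 hcont2 hη4pos hη5neg
  have hz1p : 0 < ζ1 := by linarith [hζ1.1, hη1.1, hep]
  have hz12 : ζ1 < ζ2 := hζ1.2.trans hζ2.1
  have hz23 : ζ2 < ζ3 := hζ2.2.trans hζ3.1
  have hz34 : ζ3 < ζ4 := hζ3.2.trans hζ4.1
  have conv : ∀ z : ℝ, g2 z = 0 →
      (((m:ℝ) + 6) * ((m:ℝ) + 5) * c0) * z ^ (m + 4)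
      + (((m:ℝ) + 4) * ((m:ℝ) + 3) * c2) * z ^ (m + 2)
      + (((m:ℝ) + 3) * ((m:ℝ) + 2)) * z ^ (m + 1) + 2 * c1 = 0 := by
    intro z hz
    rw [hg2def] at hz
    simp only [gF2] at hz
    linarith [hz]
  have hE := four_zeros m hz1p hz12 hz23 hz34
    (conv ζ1 hζ1e) (conv ζ2 hζ2e) (conv ζ3 hζ3e) (conv ζ4 hζ4e)
  have : (0:ℝ) < ((m:ℝ) + 3) * ((m:ℝ) + 2) := by positivity
  linarith

/-- a large point where pF is positive (leading coefficient positive) -/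
lemma pF_large {m : ℕ} {c0 c1 c2 c3 b : ℝ} (hc0 : 0 < c0) (hb : 0 < b) :
    ∃ T : ℝ, b < T ∧ 0 < pF m c0 c1 c2 c3 T := by
  set S := |c2| + |c1| + |c3| with hS
  have hS0 : 0 ≤ S := by rw [hS]; positivity
  set T := max (b + 1) ((S + c0) / c0) with hT
  have hT1 : 1 ≤ T := le_trans (by linarith : (1:ℝ) ≤ b + 1) (le_max_left _ _)
  have hTb : b < T := lt_of_lt_of_le (by linarith) (le_max_left _ _)
  have hTpos : 0 < T := by linarith
  have hc0T : S + c0 ≤ c0 * T := by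
    have h2 : (S + c0) / c0 ≤ T := le_max_right _ _
    calc S + c0 = c0 * ((S + c0) / c0) := by field_simp
      _ ≤ c0 * T := by nlinarith
  refine ⟨T, hTb, ?_⟩
  have hTnn : (0:ℝ) ≤ T := hTpos.le
  have p1 : T ^ (m + 4) ≤ T ^ (m + 5) := pow_le_pow_right₀ hT1 (by omega)
  have p2 : T ^ 2 ≤ T ^ (m + 5) := pow_le_pow_right₀ hT1 (by omega)
  have p3 : (1:ℝ) ≤ T ^ (m + 5) := by
    simpa using pow_le_pow_right₀ hT1 (Nat.zero_le (m + 5))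
  have pnn4 : (0:ℝ) ≤ T ^ (m + 4) := pow_nonneg hTnn _
  have pnn5 : (0:ℝ) ≤ T ^ (m + 5) := pow_nonneg hTnn _
  have pnn2 : (0:ℝ) ≤ T ^ 2 := pow_nonneg hTnn _
  have q2 : -(|c2| * T ^ (m + 5)) ≤ c2 * T ^ (m + 4) := by
    nlinarith [neg_abs_le c2, abs_nonneg c2]
  have q1 : -(|c1| * T ^ (m + 5)) ≤ c1 * T ^ 2 := by
    nlinarith [neg_abs_le c1, abs_nonneg c1]
  have q3 : -(|c3| * T ^ (m + 5)) ≤ c3 := by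
    nlinarith [neg_abs_le c3, abs_nonneg c3]
  have h6 : (S + c0) * T ^ (m + 5) ≤ (c0 * T) * T ^ (m + 5) :=
    mul_le_mul_of_nonneg_right hc0T pnn5
  have h7 : c0 * T ^ (m + 6) = (c0 * T) * T ^ (m + 5) := by ring
  have h8 : (|c2| * T ^ (m + 5) + |c1| * T ^ (m + 5) + |c3| * T ^ (m + 5))
      + c0 * T ^ (m + 5) ≤ c0 * T ^ (m + 6) := by
    rw [h7]
    calc (|c2| * T ^ (m + 5) + |c1| * T ^ (m + 5) + |c3| * T ^ (m + 5)) + c0 * T ^ (m + 5)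
        = (S + c0) * T ^ (m + 5) := by rw [hS]; ring
      _ ≤ (c0 * T) * T ^ (m + 5) := h6
  have hc0pos : 0 < c0 * T ^ (m + 5) := by positivity
  simp only [pF]
  linarith

/-- upper bound : g ≤ r^(m+3) on [a,b] -/
lemma bound_upper {m : ℕ} {a b c0 c1 c2 c3 : ℝ} (ha : 0 < a) (hab : a < b)
    (hc0 : 0 < c0) (hc3 : 0 < c3)
    (ga : gF m c0 c1 c2 c3 a = 0) (gb : gF m c0 c1 c2 c3 b = 0) :
    ∀ r ∈ Set.Icc a b, gF m c0 c1 c2 c3 r ≤ r ^ (m + 3) := by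
  have hb : 0 < b := ha.trans hab
  have hrel : ∀ r : ℝ, gF m c0 c1 c2 c3 r = pF m c0 c1 c2 c3 r + r ^ (m + 3) := by
    intro r; simp only [gF, pF]; ring
  have pa : pF m c0 c1 c2 c3 a = -a ^ (m + 3) := by
    have := hrel a; rw [ga] at this; linarith
  have pb : pF m c0 c1 c2 c3 b = -b ^ (m + 3) := by
    have := hrel b; rw [gb] at this; linarith
  have paneg : pF m c0 c1 c2 c3 a < 0 := by
    rw [pa]; simp only [neg_neg, neg_lt_zero]; positivity
  have pbneg : pF m c0 c1 c2 c3 b < 0 := by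
    rw [pb]; simp only [neg_neg, neg_lt_zero]; positivity
  by_contra hcon
  push_neg at hcon
  obtain ⟨ξ, hmem, hgt⟩ := hcon
  have pξ : 0 < pF m c0 c1 c2 c3 ξ := by
    have := hrel ξ; linarith
  have hξa : a < ξ := by
    rcases lt_or_eq_of_le hmem.1 with h | h
    · exact h
    · exfalso; rw [← h] at pξ; linarith
  have hξb : ξ < b := by
    rcases lt_or_eq_of_le hmem.2 with h | h
    · exact h
    · exfalso; rw [h] at pξ; linarith
  obtain ⟨t0, ht0p, ht0a, ht0g⟩ := near_zero_gt (pF_cont m c0 c1 c2 c3)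
    (by rw [pF_at_zero]; exact hc3) ha
  obtain ⟨x1, hx1, hx1e⟩ := ivt_pos_neg ht0a (pF_cont m c0 c1 c2 c3) ht0g paneg
  obtain ⟨x2, hx2, hx2e⟩ := ivt_neg_pos hξa (pF_cont m c0 c1 c2 c3) paneg pξ
  obtain ⟨x3, hx3, hx3e⟩ := ivt_pos_neg hξb (pF_cont m c0 c1 c2 c3) pξ pbneg
  obtain ⟨T, hTb, hTpos⟩ := pF_large (m := m) (c1 := c1) (c2 := c2) (c3 := c3) hc0 hb
  obtain ⟨x4, hx4, hx4e⟩ := ivt_neg_pos hTb (pF_cont m c0 c1 c2 c3) pbneg hTpos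
  have h1p : 0 < x1 := ht0p.trans hx1.1
  have h12 : x1 < x2 := hx1.2.trans hx2.1
  have h23 : x2 < x3 := hx2.2.trans hx3.1
  have h34 : x3 < x4 := hx3.2.trans hx4.1
  have := pF_four h1p h12 h23 h34 hx1e hx2e hx3e hx4e
  linarith

/-- The main bound: 0 ≤ g ≤ r^(m+3) on [a,b]. -/
lemma main_bound {m : ℕ} {a b c0 c1 c2 c3 : ℝ} (ha : 0 < a) (hab : a < b)
    (ga : gF m c0 c1 c2 c3 a = 0) (gb : gF m c0 c1 c2 c3 b = 0)
    (g1a : gF1 m c0 c1 c2 a = 0) (g1b : gF1 m c0 c1 c2 b = 0) :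
    ∀ r ∈ Set.Icc a b, 0 ≤ gF m c0 c1 c2 c3 r ∧ gF m c0 c1 c2 c3 r ≤ r ^ (m + 3) := by
  have hc0 := c0_pos ha hab ga gb g1a g1b
  have hc3 := (c1_neg_c3_pos ha hab ga gb g1a g1b).2
  intro r hr
  exact ⟨bound_lower ha hab hc3 ga gb g1a g1b r hr,
    bound_upper ha hab hc0 hc3 ga gb r hr⟩

set_option maxHeartbeats 1000000 in
/-- the interpolation linear map -/
def interpMap (m : ℕ) (a b : ℝ) : (Fin 4 → ℝ) →ₗ[ℝ] (Fin 4 → ℝ) where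
  toFun := fun c => ![pF m (c 0) (c 1) (c 2) (c 3) a, pF1 m (c 0) (c 1) (c 2) a,
    pF m (c 0) (c 1) (c 2) (c 3) b, pF1 m (c 0) (c 1) (c 2) b]
  map_add' := by
    intro u w
    funext i
    fin_cases i <;> simp [pF, pF1] <;> ring
  map_smul' := by
    intro s u
    funext i
    fin_cases i <;> simp [pF, pF1, smul_eq_mul] <;> ring

set_option maxHeartbeats 1000000 in
/-- existence of the interpolating coefficients -/
lemma exists_coeffs (m : ℕ) (a b : ℝ) (ha : 0 < a) (hab : a < b) :
    ∃ c0 c1 c2 c3 : ℝ, gF m c0 c1 c2 c3 a = 0 ∧ gF m c0 c1 c2 c3 b = 0 ∧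
      gF1 m c0 c1 c2 a = 0 ∧ gF1 m c0 c1 c2 b = 0 := by
  have hinj : Function.Injective (interpMap m a b) := by
    rw [← LinearMap.ker_eq_bot, LinearMap.ker_eq_bot']
    intro c hc
    have h4 : ∀ i : Fin 4, (interpMap m a b) c i = 0 := fun i => congrFun hc i
    have e0 : pF m (c 0) (c 1) (c 2) (c 3) a = 0 := by simpa [interpMap] using h4 0
    have e1 : pF1 m (c 0) (c 1) (c 2) a = 0 := by simpa [interpMap] using h4 1
    have e2 : pF m (c 0) (c 1) (c 2) (c 3) b = 0 := by simpa [interpMap] using h4 2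
    have e3 : pF1 m (c 0) (c 1) (c 2) b = 0 := by simpa [interpMap] using h4 3
    obtain ⟨h0, h1, h2, h3⟩ := interp_unique ha hab e0 e2 e1 e3
    funext i
    fin_cases i <;> simpa
  have hsurj : Function.Surjective (interpMap m a b) :=
    LinearMap.injective_iff_surjective.mp hinj
  obtain ⟨c, hc⟩ := hsurj ![-a ^ (m + 3), -(((m:ℝ) + 3) * a ^ (m + 2)),
    -b ^ (m + 3), -(((m:ℝ) + 3) * b ^ (m + 2))]
  have h4 : ∀ i : Fin 4, (interpMap m a b) c i
      = ![-a ^ (m + 3), -(((m:ℝ) + 3) * a ^ (m + 2)),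
        -b ^ (m + 3), -(((m:ℝ) + 3) * b ^ (m + 2))] i := fun i => congrFun hc i
  have e0 : pF m (c 0) (c 1) (c 2) (c 3) a = -a ^ (m + 3) := by
    simpa [interpMap] using h4 0
  have e1 : pF1 m (c 0) (c 1) (c 2) a = -(((m:ℝ) + 3) * a ^ (m + 2)) := by
    simpa [interpMap] using h4 1
  have e2 : pF m (c 0) (c 1) (c 2) (c 3) b = -b ^ (m + 3) := by
    simpa [interpMap] using h4 2
  have e3 : pF1 m (c 0) (c 1) (c 2) b = -(((m:ℝ) + 3) * b ^ (m + 2)) := by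
    simpa [interpMap] using h4 3
  refine ⟨c 0, c 1, c 2, c 3, ?_, ?_, ?_, ?_⟩
  · simp only [gF]; simp only [pF] at e0; linarith
  · simp only [gF]; simp only [pF] at e2; linarith
  · simp only [gF1]; simp only [pF1] at e1; linarith
  · simp only [gF1]; simp only [pF1] at e3; linarith

/-- helper for the constant cases n = 1, n = 3 -/
lemma const_case {n : ℕ} {c0 c1 c2 c3 R0 R1 : ℝ}
    (hfun : (fun r : ℝ => c0 * r ^ 3 + c1 * r ^ ((3 : ℤ) - (n : ℤ)) + c2 * r
      + c3 * r ^ ((1 : ℤ) - (n : ℤ))) = (fun _ : ℝ => (-1 : ℝ))) :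
    ∃ d0 d1 d2 d3 : ℝ, ∃ z : ℝ → ℝ,
      z = (fun r => d0 * r ^ 3 + d1 * r ^ ((3 : ℤ) - (n : ℤ)) + d2 * r
        + d3 * r ^ ((1 : ℤ) - (n : ℤ))) ∧
      z R0 = -1 ∧ z R1 = -1 ∧ deriv z R0 = 0 ∧ deriv z R1 = 0 ∧
      ∀ r ∈ Set.Icc R0 R1, |z r| ≤ 1 := by
  refine ⟨c0, c1, c2, c3, _, rfl, ?_, ?_, ?_, ?_, ?_⟩
  · exact (by simpa using congrFun hfun R0 : _)
  · exact (by simpa using congrFun hfun R1 : _)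
  · rw [hfun]; simp
  · rw [hfun]; simp
  · intro r _
    have h := congrFun hfun r
    rw [h]
    norm_num

set_option maxHeartbeats 1000000 in
theorem stmt_9' (n : ℕ) (hn : 1 ≤ n) (hn2 : n ≠ 2) (R0 R1 : ℝ)
    (h0 : 0 < R0) (h01 : R0 < R1) :
    ∃ c0 c1 c2 c3 : ℝ, ∃ z : ℝ → ℝ,
      z = (fun r => c0 * r ^ 3 + c1 * r ^ ((3 : ℤ) - (n : ℤ)) + c2 * r
        + c3 * r ^ ((1 : ℤ) - (n : ℤ))) ∧
      z R0 = -1 ∧ z R1 = -1 ∧ deriv z R0 = 0 ∧ deriv z R1 = 0 ∧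
      ∀ r ∈ Set.Icc R0 R1, |z r| ≤ 1 := by
  by_cases hn1 : n = 1
  · subst hn1
    apply const_case (c0 := 0) (c1 := 0) (c2 := 0) (c3 := -1)
    funext r
    norm_num
  by_cases hn3 : n = 3
  · subst hn3
    apply const_case (c0 := 0) (c1 := -1) (c2 := 0) (c3 := 0)
    funext r
    norm_num
  -- main case : n >= 4
  obtain ⟨m, rfl⟩ : ∃ m : ℕ, n = m + 4 := ⟨n - 4, by omega⟩
  obtain ⟨c0, c1, c2, c3, ga, gb, g1a, g1b⟩ := exists_coeffs m R0 R1 h0 h01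
  have hbnd := main_bound h0 h01 ga gb g1a g1b
  have hexp1 : (3 : ℤ) - (((m + 4 : ℕ)) : ℤ) = -(((m + 1 : ℕ)) : ℤ) := by push_cast; ring
  have hexp2 : (1 : ℤ) - (((m + 4 : ℕ)) : ℤ) = -(((m + 3 : ℕ)) : ℤ) := by push_cast; ring
  have hzfun : (fun r : ℝ => c0 * r ^ 3 + c1 * r ^ ((3 : ℤ) - (((m + 4 : ℕ)) : ℤ)) + c2 * r
      + c3 * r ^ ((1 : ℤ) - (((m + 4 : ℕ)) : ℤ)))
      = (fun r : ℝ => c0 * r ^ 3 + c1 / r ^ (m + 1) + c2 * r + c3 / r ^ (m + 3)) := by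
    funext r
    rw [hexp1, hexp2, zpow_neg, zpow_neg, zpow_natCast, zpow_natCast,
      div_eq_mul_inv, div_eq_mul_inv]
  have hI1 : ∀ r : ℝ, r ≠ 0 → gF m c0 c1 c2 c3 r
      = r ^ (m + 3) * ((c0 * r ^ 3 + c1 / r ^ (m + 1) + c2 * r + c3 / r ^ (m + 3)) + 1) := by
    intro r hr
    simp only [gF]
    field_simp
    ring
  have hval : ∀ r : ℝ, 0 < r → gF m c0 c1 c2 c3 r = 0 →
      (c0 * r ^ 3 + c1 / r ^ (m + 1) + c2 * r + c3 / r ^ (m + 3)) = -1 := by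
    intro r hr h
    have h2 := hI1 r hr.ne'
    rw [h] at h2
    rcases mul_eq_zero.mp h2.symm with h' | h'
    · exact absurd h' (pow_ne_zero _ hr.ne')
    · linarith
  have hdz : ∀ r : ℝ, r ≠ 0 → HasDerivAt
      (fun r : ℝ => c0 * r ^ 3 + c1 / r ^ (m + 1) + c2 * r + c3 / r ^ (m + 3))
      (c0 * 3 * r ^ 2 + -(c1 * ((m:ℝ) + 1)) / r ^ (m + 2) + c2
        + -(c3 * ((m:ℝ) + 3)) / r ^ (m + 4)) r := by
    intro r hr
    have h := (((hdaMono c0 3 r).add (hdaDiv c1 (m + 1) hr)).add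
      ((hasDerivAt_id r).const_mul c2)).add (hdaDiv c3 (m + 3) hr)
    have e1 : m + 1 + 1 = m + 2 := by omega
    have e2 : m + 3 + 1 = m + 4 := by omega
    rw [e1, e2] at h
    convert h using 1
    · rfl
    · rfl
    · rfl
    push_cast
    ring
  have hrel : ∀ r : ℝ, r ≠ 0 →
      r ^ (m + 3) * (c0 * 3 * r ^ 2 + -(c1 * ((m:ℝ) + 1)) / r ^ (m + 2) + c2
        + -(c3 * ((m:ℝ) + 3)) / r ^ (m + 4))
      + ((m:ℝ) + 3) * r ^ (m + 2)
        * ((c0 * r ^ 3 + c1 / r ^ (m + 1) + c2 * r + c3 / r ^ (m + 3)) + 1)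
      = gF1 m c0 c1 c2 r := by
    intro r hr
    simp only [gF1]
    field_simp
    ring
  have hder : ∀ r : ℝ, 0 < r → gF m c0 c1 c2 c3 r = 0 → gF1 m c0 c1 c2 r = 0 →
      deriv (fun r : ℝ => c0 * r ^ 3 + c1 / r ^ (m + 1) + c2 * r + c3 / r ^ (m + 3)) r
        = 0 := by
    intro r hr h h1
    have hv := hval r hr h
    have hR := hrel r hr.ne'
    rw [hv, h1] at hR
    simp only [neg_add_cancel, mul_zero, add_zero] at hR
    have hzd : (c0 * 3 * r ^ 2 + -(c1 * ((m:ℝ) + 1)) / r ^ (m + 2) + c2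
        + -(c3 * ((m:ℝ) + 3)) / r ^ (m + 4)) = 0 := by
      rcases mul_eq_zero.mp hR with h' | h'
      · exact absurd h' (pow_ne_zero _ hr.ne')
      · exact h'
    rw [(hdz r hr.ne').deriv, hzd]
  refine ⟨c0, c1, c2, c3, _, rfl, ?_, ?_, ?_, ?_, ?_⟩
  · have hz0 : c0 * R0 ^ 3 + c1 * R0 ^ ((3 : ℤ) - (((m + 4 : ℕ)) : ℤ)) + c2 * R0
        + c3 * R0 ^ ((1 : ℤ) - (((m + 4 : ℕ)) : ℤ))
        = c0 * R0 ^ 3 + c1 / R0 ^ (m + 1) + c2 * R0 + c3 / R0 ^ (m + 3) := by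
      simpa using congrFun hzfun R0
    exact hz0.trans (hval R0 h0 ga)
  · have hz1 : c0 * R1 ^ 3 + c1 * R1 ^ ((3 : ℤ) - (((m + 4 : ℕ)) : ℤ)) + c2 * R1
        + c3 * R1 ^ ((1 : ℤ) - (((m + 4 : ℕ)) : ℤ))
        = c0 * R1 ^ 3 + c1 / R1 ^ (m + 1) + c2 * R1 + c3 / R1 ^ (m + 3) := by
      simpa using congrFun hzfun R1
    exact hz1.trans (hval R1 (h0.trans h01) gb)
  · rw [hzfun]; exact hder R0 h0 ga g1a
  · rw [hzfun]; exact hder R1 (h0.trans h01) gb g1b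
  · intro r hr
    have hrpos : 0 < r := lt_of_lt_of_le h0 hr.1
    have hz := congrFun hzfun r
    rw [hz]
    have hb := hbnd r hr
    have hip := hI1 r hrpos.ne'
    have hppos : 0 < r ^ (m + 3) := pow_pos hrpos _
    set w := c0 * r ^ 3 + c1 / r ^ (m + 1) + c2 * r + c3 / r ^ (m + 3) with hw
    have h1 : 0 ≤ w + 1 := by nlinarith [hb.1, hip, hppos]
    have h2 : w + 1 ≤ 1 := by nlinarith [hb.2, hip, hppos]
    rw [abs_le]
    constructor <;> linarith


/-- For `n ≠ 2`, every annulus with non-constant signature is calibrable: there is a radial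
profile `z(r) = c₀ r³ + c₁ r^{3−n} + c₂ r + c₃ r^{1−n}` with `z(R₀) = −1`, `z(R₁) = −1`,
`z′(R₀) = z′(R₁) = 0` and `|z| ≤ 1` on `[R₀, R₁]`. -/
theorem stmt_9 (n : ℕ) (hn : 1 ≤ n) (hn2 : n ≠ 2) (R0 R1 : ℝ)
    (h0 : 0 < R0) (h01 : R0 < R1) :
    ∃ c0 c1 c2 c3 : ℝ, ∃ z : ℝ → ℝ,
      z = (fun r => c0 * r ^ 3 + c1 * r ^ ((3 : ℤ) - (n : ℤ)) + c2 * r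
        + c3 * r ^ ((1 : ℤ) - (n : ℤ))) ∧
      z R0 = -1 ∧ z R1 = -1 ∧ deriv z R0 = 0 ∧ deriv z R1 = 0 ∧
      ∀ r ∈ Set.Icc R0 R1, |z r| ≤ 1 := by
  exact stmt_9' n hn hn2 R0 R1 h0 h01
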